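/- The restriction of P to the real interval [0,1] is a strictly increasing bijection of [0,1] onto itself; let g : [0,1] → [0,1] denote its inverse. Then for every x ∈ (0,1], the limit Ψ(x) := lim_{N→∞} 2^N ( g^{∘N}(x) − 1 ) exists and is a nonpositive real number, the function Ψ is continuous on (0,1], Ψ(1) = 0, Ψ(P(x)) = 2Ψ(x) for all x ∈ (0,1], and Ψ(x)/(x−1) → 1 as x → 1⁻. -/

import Mathlib

open Filter

/-- The cubic polynomial `P(x) = (x + 2x² + x³)/4` on the reals. -/
noncomputable def Pr : ℝ → ℝ := fun x => (x + 2 * x ^ 2 + x ^ 3) / 4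

open Set

lemma Pr_mono : StrictMonoOn Pr (Set.Icc 0 1) := by
  intro x hx y hy hxy
  simp only [Pr]
  have hx0 : (0:ℝ) ≤ x := hx.1
  nlinarith [sq_nonneg (x + y), sq_nonneg x, sq_nonneg y]

lemma Pr_cont : Continuous Pr := by
  unfold Pr; continuity

lemma Pr_maps : ∀ x ∈ Set.Icc (0:ℝ) 1, Pr x ∈ Set.Icc (0:ℝ) 1 := by
  intro x hx
  obtain ⟨h0, h1⟩ := hx
  constructor
  · simp only [Pr]; nlinarith
  · simp only [Pr]; nlinarith

lemma Pr_bij : Set.BijOn Pr (Set.Icc 0 1) (Set.Icc 0 1) := by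
  refine ⟨Pr_maps, Pr_mono.injOn, ?_⟩
  have h := intermediate_value_Icc (by norm_num : (0:ℝ) ≤ 1) (Pr_cont.continuousOn)
  have h0 : Pr 0 = 0 := by simp [Pr]
  have h1 : Pr 1 = 1 := by norm_num [Pr]
  rw [h0, h1] at h
  exact h

section G
variable {g : ℝ → ℝ} (hg : ∀ x ∈ Set.Icc (0 : ℝ) 1, g x ∈ Set.Icc (0 : ℝ) 1 ∧ Pr (g x) = x)
include hg

lemma g_mem : ∀ x ∈ Set.Icc (0:ℝ) 1, g x ∈ Set.Icc (0:ℝ) 1 := fun x hx => (hg x hx).1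

lemma g_left : ∀ y ∈ Set.Icc (0:ℝ) 1, g (Pr y) = y := by
  intro y hy
  have hPy := Pr_maps y hy
  have h := (hg (Pr y) hPy).2
  exact Pr_mono.injOn (hg (Pr y) hPy).1 hy h

lemma iter_mem : ∀ x ∈ Set.Icc (0:ℝ) 1, ∀ N, g^[N] x ∈ Set.Icc (0:ℝ) 1 := by
  intro x hx N
  induction N with
  | zero => simpa
  | succ n ih => rw [Function.iterate_succ_apply']; exact (hg _ ih).1

/-- key recursion identity -/
lemma key_id : ∀ y ∈ Set.Icc (0:ℝ) 1,
    1 - y = 2 * (1 - g y) - (5 * (1 - g y) ^ 2 - (1 - g y) ^ 3) / 4 := by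
  intro y hy
  have h := (hg y hy).2
  simp only [Pr] at h
  linear_combination h

/-- g y ≥ y on [0,1] -/
lemma g_ge : ∀ y ∈ Set.Icc (0:ℝ) 1, y ≤ g y := by
  intro y hy
  have h := key_id hg y hy
  obtain ⟨hv0, hv1⟩ := (hg y hy).1
  nlinarith [h, mul_nonneg (mul_nonneg (sub_nonneg.2 hv1) hv0) (by linarith : (0:ℝ) ≤ 3 + g y)]

/-- contraction step -/
lemma step (b : ℝ) (hb0 : 0 ≤ b) (hb1 : b < 1) :
    ∀ y ∈ Set.Icc (0:ℝ) 1, 1 - g y ≤ b →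
    1 - g y ≤ (1 - y) / (2 - b * (5 - b) / 4) := by
  intro y hy hvb
  have h := key_id hg y hy
  obtain ⟨hv0, hv1⟩ := (hg y hy).1
  have hden : 0 < 2 - b * (5 - b) / 4 := by nlinarith
  rw [le_div_iff₀ hden]
  nlinarith [h, mul_nonneg (sub_nonneg.2 hv1) (sub_nonneg.2 hvb)]

end G

noncomputable def Af (g : ℝ → ℝ) (x : ℝ) (N : ℕ) : ℝ := 2 ^ N * (1 - g^[N] x)

section G2
variable {g : ℝ → ℝ} (hg : ∀ x ∈ Set.Icc (0 : ℝ) 1, g x ∈ Set.Icc (0 : ℝ) 1 ∧ Pr (g x) = x)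
include hg

lemma A_nonneg {x : ℝ} (hx : x ∈ Set.Icc (0:ℝ) 1) (N : ℕ) : 0 ≤ Af g x N := by
  have h := (iter_mem hg x hx N).2
  have : (0:ℝ) ≤ 2 ^ N := by positivity
  unfold Af; nlinarith

lemma A_mono {x : ℝ} (hx : x ∈ Set.Icc (0:ℝ) 1) : Monotone (Af g x) := by
  apply monotone_nat_of_le_succ
  intro N
  set y := g^[N] x with hy
  have hymem : y ∈ Set.Icc (0:ℝ) 1 := iter_mem hg x hx N
  have hid := key_id hg y hymem
  obtain ⟨hv0, hv1⟩ := (hg y hymem).1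
  have h2 : (0:ℝ) ≤ 2 ^ N := by positivity
  simp only [Af, Function.iterate_succ_apply', ← hy, pow_succ]
  nlinarith [hid, mul_nonneg h2 (mul_nonneg (sq_nonneg (1 - g y)) (show (0:ℝ) ≤ 5 - (1 - g y) by linarith))]

lemma decay {x b0 : ℝ} (hx : x ∈ Set.Icc (0:ℝ) 1) (hb : 1 - x ≤ b0)
    (hb0 : 0 ≤ b0) (hb1 : b0 < 1) :
    ∀ N, 1 - g^[N] x ≤ (1 / (2 - b0 * (5 - b0) / 4)) ^ N * (1 - x) := by
  have hden : (1:ℝ) < 2 - b0 * (5 - b0) / 4 := by nlinarith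
  have hc0 : 0 < 1 / (2 - b0 * (5 - b0) / 4) := by positivity
  have hc1 : 1 / (2 - b0 * (5 - b0) / 4) < 1 := by
    rw [div_lt_one (by linarith)]; linarith
  intro N
  induction N with
  | zero => simp
  | succ n ih =>
    set c : ℝ := 1 / (2 - b0 * (5 - b0) / 4) with hc
    set y := g^[n] x with hy
    have hymem : y ∈ Set.Icc (0:ℝ) 1 := iter_mem hg x hx n
    have hcn1 : c ^ n ≤ 1 := pow_le_one₀ hc0.le hc1.le
    have hx1 : 1 - x ≤ 1 := by linarith [hx.1]
    have h1y : 1 - y ≤ c ^ n * (1 - x) := ih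
    have hb' : 1 - g y ≤ b0 := by
      have := g_ge hg y hymem
      have : 1 - g y ≤ 1 - y := by linarith
      calc 1 - g y ≤ c ^ n * (1 - x) := by linarith
        _ ≤ 1 * b0 := by
            apply mul_le_mul hcn1 hb (by linarith [(iter_mem hg x hx 0).2, hx.2]) zero_le_one
        _ = b0 := one_mul b0
    have hstep := step hg b0 hb0 hb1 y hymem hb'
    rw [Function.iterate_succ_apply', ← hy]
    calc 1 - g y ≤ (1 - y) / (2 - b0 * (5 - b0) / 4) := hstep
      _ = c * (1 - y) := by rw [hc]; ring
      _ ≤ c * (c ^ n * (1 - x)) := by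
          apply mul_le_mul_of_nonneg_left h1y hc0.le
      _ = c ^ (n + 1) * (1 - x) := by ring

lemma A_growth {x b0 : ℝ} (hx : x ∈ Set.Icc (0:ℝ) 1) (hb : 1 - x ≤ b0)
    (hb0 : 0 ≤ b0) (hb1 : b0 < 1) (N : ℕ) :
    Af g x (N + 1) ≤ Af g x N *
      Real.exp (5 / 4 * (1 / (2 - b0 * (5 - b0) / 4)) ^ (N + 1) * (1 - x)) := by
  set y := g^[N] x with hy
  have hymem : y ∈ Set.Icc (0:ℝ) 1 := iter_mem hg x hx N
  have hid := key_id hg y hymem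
  obtain ⟨hv0, hv1⟩ := (hg y hymem).1
  set v := 1 - g y with hv
  have hvv0 : 0 ≤ v := by simp [hv]; linarith
  have hvv1 : v ≤ 1 := by simp [hv]; linarith
  set t := v * (5 - v) / 8 with ht
  have ht0 : 0 ≤ t := by
    rw [ht]; nlinarith [mul_nonneg hvv0 (show (0:ℝ) ≤ 5 - v by linarith)]
  have ht2 : t ≤ 1 / 2 := by
    rw [ht]; nlinarith [mul_nonneg (sub_nonneg.2 hvv1) (show (0:ℝ) ≤ 4 - v by linarith)]
  have hrec : Af g x N = Af g x (N + 1) * (1 - t) := by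
    simp only [Af, Function.iterate_succ_apply', ← hy, ← hv, pow_succ, ht]
    linear_combination (2:ℝ) ^ N * hid
  have hA1 : 0 ≤ Af g x (N + 1) := A_nonneg hg hx (N + 1)
  have h1 : Af g x (N + 1) ≤ Af g x N * (1 + 2 * t) := by
    rw [hrec]; nlinarith [mul_nonneg hA1 (mul_nonneg ht0 (show (0:ℝ) ≤ 1 - 2 * t by linarith))]
  have hvb : v ≤ (1 / (2 - b0 * (5 - b0) / 4)) ^ (N + 1) * (1 - x) := by
    have := decay hg hx hb hb0 hb1 (N + 1)
    rw [Function.iterate_succ_apply', ← hy] at this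
    exact this
  have h2t : 2 * t ≤ 5 / 4 * (1 / (2 - b0 * (5 - b0) / 4)) ^ (N + 1) * (1 - x) := by
    rw [ht]; nlinarith
  calc Af g x (N + 1) ≤ Af g x N * (1 + 2 * t) := h1
    _ ≤ Af g x N * Real.exp (2 * t) := by
        apply mul_le_mul_of_nonneg_left _ (A_nonneg hg hx N)
        linarith [Real.add_one_le_exp (2 * t)]
    _ ≤ _ := by
        apply mul_le_mul_of_nonneg_left _ (A_nonneg hg hx N)
        exact Real.exp_le_exp.2 h2t

end G2

noncomputable def cv (b : ℝ) : ℝ := 1 / (2 - b * (5 - b) / 4)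
noncomputable def Ff (g : ℝ → ℝ) (x b0 : ℝ) (N : ℕ) : ℝ :=
  Af g x N * Real.exp (5 / 4 * (1 - x) * cv b0 ^ (N + 1) / (1 - cv b0))
noncomputable def Sf (g : ℝ → ℝ) (x : ℝ) : ℝ := ⨆ N, Af g x N

lemma cv_pos {b : ℝ} (hb0 : 0 ≤ b) (hb1 : b < 1) : 0 < cv b := by
  unfold cv; have : (1:ℝ) < 2 - b * (5 - b) / 4 := by nlinarith
  positivity

lemma cv_lt_one {b : ℝ} (hb0 : 0 ≤ b) (hb1 : b < 1) : cv b < 1 := by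
  unfold cv
  have h : (1:ℝ) < 2 - b * (5 - b) / 4 := by nlinarith
  rw [div_lt_one (by linarith)]; exact h

section G3
variable {g : ℝ → ℝ} (hg : ∀ x ∈ Set.Icc (0 : ℝ) 1, g x ∈ Set.Icc (0 : ℝ) 1 ∧ Pr (g x) = x)
include hg

lemma F_anti {x b0 : ℝ} (hx : x ∈ Set.Icc (0:ℝ) 1) (hb : 1 - x ≤ b0)
    (hb0 : 0 ≤ b0) (hb1 : b0 < 1) : Antitone (Ff g x b0) := by
  have hc1 : cv b0 < 1 := cv_lt_one hb0 hb1
  have hcne : (1:ℝ) - cv b0 ≠ 0 := by linarith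
  apply antitone_nat_of_succ_le
  intro N
  have hgrow := A_growth hg hx hb hb0 hb1 N
  have hexp : Real.exp (5 / 4 * cv b0 ^ (N + 1) * (1 - x)) *
      Real.exp (5 / 4 * (1 - x) * cv b0 ^ (N + 1 + 1) / (1 - cv b0)) =
      Real.exp (5 / 4 * (1 - x) * cv b0 ^ (N + 1) / (1 - cv b0)) := by
    rw [← Real.exp_add]
    congr 1
    have hp : cv b0 ^ (N + 1 + 1) = cv b0 ^ (N + 1) * cv b0 := pow_succ _ _
    field_simp
    ring
  calc Ff g x b0 (N + 1)
      = Af g x (N + 1) * Real.exp (5 / 4 * (1 - x) * cv b0 ^ (N + 1 + 1) / (1 - cv b0)) := rfl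
    _ ≤ (Af g x N * Real.exp (5 / 4 * (1 / (2 - b0 * (5 - b0) / 4)) ^ (N + 1) * (1 - x))) *
        Real.exp (5 / 4 * (1 - x) * cv b0 ^ (N + 1 + 1) / (1 - cv b0)) :=
        mul_le_mul_of_nonneg_right hgrow (Real.exp_pos _).le
    _ = Af g x N * (Real.exp (5 / 4 * cv b0 ^ (N + 1) * (1 - x)) *
        Real.exp (5 / 4 * (1 - x) * cv b0 ^ (N + 1 + 1) / (1 - cv b0))) := by
        unfold cv; ring
    _ = Ff g x b0 N := by rw [hexp]; rfl

omit hg in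
lemma exparg_nonneg {x b0 : ℝ} (hx : x ∈ Set.Icc (0:ℝ) 1)
    (hb0 : 0 ≤ b0) (hb1 : b0 < 1) (N : ℕ) :
    0 ≤ 5 / 4 * (1 - x) * cv b0 ^ (N + 1) / (1 - cv b0) := by
  have hc0 := cv_pos hb0 hb1
  have hc1 := cv_lt_one hb0 hb1
  have hx1 : 0 ≤ 1 - x := by linarith [hx.2]
  have : (0:ℝ) ≤ cv b0 ^ (N + 1) := by positivity
  apply div_nonneg (by nlinarith) (by linarith)

lemma A_le_F {x b0 : ℝ} (hx : x ∈ Set.Icc (0:ℝ) 1) (hb : 1 - x ≤ b0)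
    (hb0 : 0 ≤ b0) (hb1 : b0 < 1) (M N : ℕ) : Af g x M ≤ Ff g x b0 N := by
  have hAF : ∀ K, Af g x K ≤ Ff g x b0 K := by
    intro K
    exact le_mul_of_one_le_right (A_nonneg hg hx K)
      (Real.one_le_exp (exparg_nonneg hx hb0 hb1 K))
  rcases le_total M N with h | h
  · exact le_trans (A_mono hg hx h) (hAF N)
  · exact le_trans (hAF M) (F_anti hg hx hb hb0 hb1 h)

lemma A_bdd {x b0 : ℝ} (hx : x ∈ Set.Icc (0:ℝ) 1) (hb : 1 - x ≤ b0)
    (hb0 : 0 ≤ b0) (hb1 : b0 < 1) : BddAbove (Set.range (Af g x)) :=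
  ⟨Ff g x b0 0, by rintro _ ⟨M, rfl⟩; exact A_le_F hg hx hb hb0 hb1 M 0⟩

lemma A_tendsto {x b0 : ℝ} (hx : x ∈ Set.Icc (0:ℝ) 1) (hb : 1 - x ≤ b0)
    (hb0 : 0 ≤ b0) (hb1 : b0 < 1) :
    Tendsto (Af g x) atTop (nhds (Sf g x)) :=
  tendsto_atTop_ciSup (A_mono hg hx) (A_bdd hg hx hb hb0 hb1)

lemma A_le_S {x b0 : ℝ} (hx : x ∈ Set.Icc (0:ℝ) 1) (hb : 1 - x ≤ b0)
    (hb0 : 0 ≤ b0) (hb1 : b0 < 1) (N : ℕ) : Af g x N ≤ Sf g x :=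
  le_ciSup (A_bdd hg hx hb hb0 hb1) N

lemma S_le_F {x b0 : ℝ} (hx : x ∈ Set.Icc (0:ℝ) 1) (hb : 1 - x ≤ b0)
    (hb0 : 0 ≤ b0) (hb1 : b0 < 1) (N : ℕ) : Sf g x ≤ Ff g x b0 N :=
  ciSup_le fun M => A_le_F hg hx hb hb0 hb1 M N

end G3

section G4
variable {g : ℝ → ℝ} (hg : ∀ x ∈ Set.Icc (0 : ℝ) 1, g x ∈ Set.Icc (0 : ℝ) 1 ∧ Pr (g x) = x)
include hg

lemma g_contOn : ContinuousOn g (Set.Icc (0:ℝ) 1) := by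
  set e : Set.Icc (0:ℝ) 1 → Set.Icc (0:ℝ) 1 := fun y => ⟨Pr y, Pr_maps y y.2⟩ with he
  have hec : Continuous e := Continuous.subtype_mk (Pr_cont.comp continuous_subtype_val) _
  have hbij : Function.Bijective e := by
    constructor
    · intro a b hab
      have h : Pr a = Pr b := congrArg Subtype.val hab
      exact Subtype.ext (Pr_bij.injOn a.2 b.2 h)
    · intro z
      obtain ⟨y, hy, hyz⟩ := Pr_bij.surjOn z.2
      exact ⟨⟨y, hy⟩, Subtype.ext hyz⟩
  have hE : Continuous (Equiv.ofBijective e hbij) := hec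
  let H := hE.homeoOfEquivCompactToT2
  rw [continuousOn_iff_continuous_restrict]
  have hres : Set.restrict (Set.Icc (0:ℝ) 1) g = Subtype.val ∘ H.symm := by
    funext z
    have h1 : e (H.symm z) = z := H.apply_symm_apply z
    have h2 : Pr ((H.symm z : Set.Icc (0:ℝ) 1) : ℝ) = (z : ℝ) := congrArg Subtype.val h1
    have h3 : Pr (g (z : ℝ)) = (z : ℝ) := (hg z z.2).2
    simp only [Set.restrict_apply, Function.comp_apply]
    exact Pr_mono.injOn (hg z z.2).1 (H.symm z).2 (h3.trans h2.symm)
  change Continuous (Set.restrict (Set.Icc (0:ℝ) 1) g)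
  rw [hres]
  exact continuous_subtype_val.comp H.symm.continuous

lemma iterate_contOn : ∀ N, ContinuousOn (g^[N]) (Set.Icc (0:ℝ) 1) := by
  intro N
  induction N with
  | zero => exact continuousOn_id
  | succ n ih =>
    rw [Function.iterate_succ']
    exact (g_contOn hg).comp ih (fun x hx => iter_mem hg x hx n)

lemma A_contOn (N : ℕ) : ContinuousOn (fun x => Af g x N) (Set.Icc (0:ℝ) 1) := by
  unfold Af
  exact continuousOn_const.mul (continuousOn_const.sub (iterate_contOn hg N))

lemma unif_conv {δ : ℝ} (hδ0 : 0 < δ) (hδ1 : δ < 1) :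
    TendstoUniformlyOn (fun N x => -(Af g x N)) (fun x => -(Sf g x)) atTop
      (Set.Icc δ 1) := by
  set b0 : ℝ := 1 - δ with hb0def
  have hb0 : 0 ≤ b0 := by simp [hb0def]; linarith
  have hb1 : b0 < 1 := by simp [hb0def]; linarith
  have hc0 := cv_pos hb0 hb1
  have hc1 := cv_lt_one hb0 hb1
  set C : ℝ := Real.exp (5 / 4 * cv b0 / (1 - cv b0)) with hC
  have hmem : ∀ x ∈ Set.Icc δ 1, x ∈ Set.Icc (0:ℝ) 1 := fun x hx =>
    ⟨le_trans hδ0.le hx.1, hx.2⟩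
  have hble : ∀ x ∈ Set.Icc δ 1, 1 - x ≤ b0 := fun x hx => by
    simp [hb0def]; linarith [hx.1]
  -- key bound
  have hkey : ∀ N, ∀ x ∈ Set.Icc δ 1,
      Sf g x - Af g x N ≤ C * (Real.exp (5 / 4 * cv b0 ^ (N + 1) / (1 - cv b0)) - 1) := by
    intro N x hx
    have hxm := hmem x hx
    have hbx := hble x hx
    have h1x : 0 ≤ 1 - x := by linarith [hx.2]
    have h1x1 : 1 - x ≤ 1 := by linarith [hδ0, hx.1]
    have hA0 : Af g x 0 = 1 - x := by simp [Af]
    have hAN := A_nonneg hg hxm N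
    have hsN : 5 / 4 * (1 - x) * cv b0 ^ (N + 1) / (1 - cv b0) ≤
        5 / 4 * cv b0 ^ (N + 1) / (1 - cv b0) := by
      apply div_le_div_of_nonneg_right ?_ (by linarith) |>.trans_eq rfl
      have : (0:ℝ) ≤ cv b0 ^ (N + 1) := by positivity
      nlinarith
    -- A x N ≤ C
    have hAC : Af g x N ≤ C := by
      have h1 := A_le_F hg hxm hbx hb0 hb1 N 0
      have : Ff g x b0 0 ≤ C := by
        unfold Ff
        rw [hA0, hC]
        have harg : 5 / 4 * (1 - x) * cv b0 ^ (0 + 1) / (1 - cv b0) ≤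
            5 / 4 * cv b0 / (1 - cv b0) := by
          apply div_le_div_of_nonneg_right ?_ (by linarith) |>.trans_eq rfl
          norm_num
          nlinarith
        calc (1 - x) * Real.exp (5 / 4 * (1 - x) * cv b0 ^ (0 + 1) / (1 - cv b0))
            ≤ 1 * Real.exp (5 / 4 * cv b0 / (1 - cv b0)) :=
              mul_le_mul h1x1 (Real.exp_le_exp.2 harg) (Real.exp_pos _).le zero_le_one
          _ = _ := one_mul _
      linarith [A_le_S hg hxm hbx hb0 hb1 N]
    have hSF := S_le_F hg hxm hbx hb0 hb1 N
    have hFexp : Ff g x b0 N ≤ Af g x N * Real.exp (5 / 4 * cv b0 ^ (N + 1) / (1 - cv b0)) := by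
      unfold Ff
      exact mul_le_mul_of_nonneg_left (Real.exp_le_exp.2 hsN) hAN
    have hE1 : (1:ℝ) ≤ Real.exp (5 / 4 * cv b0 ^ (N + 1) / (1 - cv b0)) := by
      apply Real.one_le_exp
      have : (0:ℝ) ≤ cv b0 ^ (N + 1) := by positivity
      apply div_nonneg (by nlinarith) (by linarith)
    nlinarith
  rw [Metric.tendstoUniformlyOn_iff]
  intro ε hε
  have htend : Tendsto (fun N : ℕ => C * (Real.exp (5 / 4 * cv b0 ^ (N + 1) / (1 - cv b0)) - 1))
      atTop (nhds 0) := by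
    have h1 : Tendsto (fun N : ℕ => cv b0 ^ (N + 1)) atTop (nhds 0) := by
      have := (tendsto_pow_atTop_nhds_zero_of_lt_one hc0.le hc1).comp (tendsto_add_atTop_nat 1)
      exact this
    have h2 : Tendsto (fun N : ℕ => 5 / 4 * cv b0 ^ (N + 1) / (1 - cv b0)) atTop (nhds 0) := by
      have := (h1.const_mul (5/4 : ℝ)).div_const (1 - cv b0)
      simpa using this
    have h3 := (Real.continuous_exp.tendsto 0).comp h2
    simp only [Real.exp_zero] at h3
    have h4 : Tendsto (fun N : ℕ => Real.exp (5 / 4 * cv b0 ^ (N + 1) / (1 - cv b0)) - 1)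
        atTop (nhds 0) := by
      have := h3.sub_const 1
      simpa using this
    have := h4.const_mul C
    simpa using this
  filter_upwards [htend.eventually (eventually_lt_nhds hε)] with N hN x hx
  have hk := hkey N x hx
  have hge : Af g x N ≤ Sf g x := A_le_S hg (hmem x hx) (hble x hx) hb0 hb1 N
  rw [Real.dist_eq, abs_of_nonpos (by linarith)]
  linarith

end G4

section Main
variable {g : ℝ → ℝ} (hg : ∀ x ∈ Set.Icc (0 : ℝ) 1, g x ∈ Set.Icc (0 : ℝ) 1 ∧ Pr (g x) = x)
include hg

lemma part1 : ∀ x ∈ Set.Ioc (0 : ℝ) 1,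
    Tendsto (fun N : ℕ => (2 : ℝ) ^ N * (g^[N] x - 1)) atTop (nhds (-(Sf g x))) ∧
    -(Sf g x) ≤ 0 := by
  intro x hx
  have hxm : x ∈ Set.Icc (0:ℝ) 1 := ⟨hx.1.le, hx.2⟩
  have hb : 1 - x ≤ 1 - x := le_rfl
  have hb0 : (0:ℝ) ≤ 1 - x := by linarith [hx.2]
  have hb1 : 1 - x < 1 := by linarith [hx.1]
  constructor
  · have hfun : (fun N : ℕ => (2:ℝ) ^ N * (g^[N] x - 1)) = fun N => -(Af g x N) := by
      funext N; simp only [Af]; ring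
    rw [hfun]
    exact (A_tendsto hg hxm hb hb0 hb1).neg
  · have h0 := A_le_S hg hxm hb hb0 hb1 0
    have hA0 : Af g x 0 = 1 - x := by simp [Af]
    linarith [h0, hA0 ▸ h0]

lemma part2 : ContinuousOn (fun x => -(Sf g x)) (Set.Ioc (0:ℝ) 1) := by
  intro x0 hx0
  have hδ0 : 0 < x0 / 2 := by linarith [hx0.1]
  have hδ1 : x0 / 2 < 1 := by linarith [hx0.2]
  have hsub : Set.Icc (x0/2) 1 ⊆ Set.Icc (0:ℝ) 1 := fun y hy => ⟨le_trans hδ0.le hy.1, hy.2⟩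
  have hCont : ContinuousOn (fun x => -(Sf g x)) (Set.Icc (x0/2) 1) :=
    (unif_conv hg hδ0 hδ1).continuousOn
      (Filter.Eventually.of_forall (f := atTop) fun N => ((A_contOn hg N).mono hsub).neg).frequently
  have hC := hCont x0 ⟨by linarith [hx0.1], hx0.2⟩
  apply hC.mono_of_mem_nhdsWithin
  rw [mem_nhdsWithin]
  refine ⟨Set.Ioi (x0/2), isOpen_Ioi, by simpa using by linarith [hx0.1], ?_⟩
  rintro y ⟨hy1, hy2⟩
  exact ⟨le_of_lt hy1, hy2.2⟩

lemma part3 : -(Sf g 1) = 0 := by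
  have hg1 : g 1 = 1 := by
    have := g_left hg 1 ⟨zero_le_one, le_rfl⟩
    have hPr1 : Pr 1 = 1 := by norm_num [Pr]
    rwa [hPr1] at this
  have hA : ∀ N, Af g 1 N = 0 := by
    intro N
    simp [Af, Function.iterate_fixed hg1]
  simp [Sf, hA]

lemma part4 : ∀ x ∈ Set.Ioc (0 : ℝ) 1, -(Sf g (Pr x)) = 2 * -(Sf g x) := by
  intro x hx
  have hxm : x ∈ Set.Icc (0:ℝ) 1 := ⟨hx.1.le, hx.2⟩
  have hPx : Pr x ∈ Set.Icc (0:ℝ) 1 := Pr_maps x hxm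
  have hPx0 : 0 < Pr x := by
    simp only [Pr]; nlinarith [hx.1, sq_nonneg x]
  have hshift : ∀ N, Af g (Pr x) (N + 1) = 2 * Af g x N := by
    intro N
    have hgP : g (Pr x) = x := g_left hg x hxm
    simp only [Af, Function.iterate_succ_apply, hgP, pow_succ]
    ring
  have ht1 : Tendsto (Af g (Pr x)) atTop (nhds (Sf g (Pr x))) :=
    A_tendsto hg hPx le_rfl (by linarith [hPx.2]) (by linarith [hPx0])
  have ht2 : Tendsto (fun N => Af g (Pr x) (N + 1)) atTop (nhds (Sf g (Pr x))) :=
    ht1.comp (tendsto_add_atTop_nat 1)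
  have ht3 : Tendsto (fun N => 2 * Af g x N) atTop (nhds (2 * Sf g x)) :=
    (A_tendsto hg hxm le_rfl (by linarith [hx.2]) (by linarith [hx.1])).const_mul 2
  have heq : Sf g (Pr x) = 2 * Sf g x := by
    apply tendsto_nhds_unique (by simpa only [hshift] using ht2) ht3
  rw [heq]; ring

lemma part5 : Tendsto (fun x => -(Sf g x) / (x - 1)) (nhdsWithin 1 (Set.Iio 1)) (nhds 1) := by
  have hc0 := cv_pos (b := 1/2) (by norm_num) (by norm_num)
  have hc1 := cv_lt_one (b := 1/2) (by norm_num) (by norm_num)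
  set h : ℝ → ℝ := fun x => Real.exp (5 / 4 * (1 - x) * cv (1/2) / (1 - cv (1/2))) with hh
  have hhtend : Tendsto h (nhdsWithin 1 (Set.Iio 1)) (nhds 1) := by
    have hcont : Continuous h := by
      apply Real.continuous_exp.comp
      continuity
    have : h 1 = 1 := by simp [hh]
    have := hcont.tendsto 1
    rw [‹h 1 = 1›] at this
    exact this.mono_left nhdsWithin_le_nhds
  have hmem : Set.Ioo (1/2 : ℝ) 1 ∈ nhdsWithin 1 (Set.Iio (1:ℝ)) :=
    Ioo_mem_nhdsLT_of_mem ⟨by norm_num, le_rfl⟩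
  apply tendsto_of_tendsto_of_tendsto_of_le_of_le' tendsto_const_nhds hhtend
  · filter_upwards [hmem] with x hx
    have hxm : x ∈ Set.Icc (0:ℝ) 1 := ⟨by linarith [hx.1], hx.2.le⟩
    have h1x : 0 < 1 - x := by linarith [hx.2]
    have hb : 1 - x ≤ 1/2 := by linarith [hx.1]
    have hS : 1 - x ≤ Sf g x := by
      have h0 := A_le_S hg hxm hb (by norm_num) (by norm_num) 0
      have hA0 : Af g x 0 = 1 - x := by simp [Af]
      linarith [hA0 ▸ h0]
    have hrw : -(Sf g x) / (x - 1) = Sf g x / (1 - x) := by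
      rw [show x - 1 = -(1 - x) by ring, div_neg, neg_div, neg_neg]
    rw [hrw, le_div_iff₀ h1x]
    linarith
  · filter_upwards [hmem] with x hx
    have hxm : x ∈ Set.Icc (0:ℝ) 1 := ⟨by linarith [hx.1], hx.2.le⟩
    have h1x : 0 < 1 - x := by linarith [hx.2]
    have hb : 1 - x ≤ 1/2 := by linarith [hx.1]
    have hSF := S_le_F hg hxm hb (by norm_num) (by norm_num) 0
    have hF0 : Ff g x (1/2) 0 = (1 - x) * h x := by
      unfold Ff
      have hA0 : Af g x 0 = 1 - x := by simp [Af]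
      rw [hA0, hh]
      norm_num
    have hrw : -(Sf g x) / (x - 1) = Sf g x / (1 - x) := by
      rw [show x - 1 = -(1 - x) by ring, div_neg, neg_div, neg_neg]
    rw [hrw, div_le_iff₀ h1x]
    rw [hF0] at hSF
    linarith [hSF]

end Main

/-- `P` restricted to `[0,1]` is a strictly increasing bijection of `[0,1]`
onto itself; for its inverse `g`, the limit `Ψ(x) = lim 2^N (g^{∘N}(x) - 1)` exists and is
nonpositive for every `x ∈ (0,1]`, `Ψ` is continuous on `(0,1]`, `Ψ(1) = 0`,
`Ψ(P(x)) = 2Ψ(x)` on `(0,1]`, and `Ψ(x)/(x-1) → 1` as `x → 1⁻`. -/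
theorem stmt10 :
    StrictMonoOn Pr (Set.Icc 0 1) ∧
    Set.BijOn Pr (Set.Icc 0 1) (Set.Icc 0 1) ∧
    ∀ g : ℝ → ℝ,
      (∀ x ∈ Set.Icc (0 : ℝ) 1, g x ∈ Set.Icc (0 : ℝ) 1 ∧ Pr (g x) = x) →
      ∃ Ψ : ℝ → ℝ,
        (∀ x ∈ Set.Ioc (0 : ℝ) 1,
          Tendsto (fun N : ℕ => (2 : ℝ) ^ N * (g^[N] x - 1)) atTop (nhds (Ψ x)) ∧
          Ψ x ≤ 0) ∧
        ContinuousOn Ψ (Set.Ioc 0 1) ∧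
        Ψ 1 = 0 ∧
        (∀ x ∈ Set.Ioc (0 : ℝ) 1, Ψ (Pr x) = 2 * Ψ x) ∧
        Tendsto (fun x => Ψ x / (x - 1)) (nhdsWithin 1 (Set.Iio 1)) (nhds 1) := by
  refine ⟨Pr_mono, Pr_bij, ?_⟩
  intro g hg
  exact ⟨fun x => -(Sf g x), part1 hg, part2 hg, part3 hg, part4 hg, part5 hg⟩
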